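/- Lower bound via independent points: for every integer t ≥ 1, the set A = {0, e_1, ..., e_t} ⊆ Z_2^t satisfies |A| = t+1, |A+A| = C(t,2) + t + 1, and ⟨A⟩ = Z_2^t. Consequently F((C(t,2)+t+1)/(t+1)) ≥ 2^t/(t+1). -/

import Mathlib

open Finset Pointwise
open scoped symmDiff

lemma zmod2_self_add {n : ℕ} (x : Fin n → ZMod 2) : x + x = 0 := by
  funext j; show (x j) + (x j) = 0
  have : ∀ a : ZMod 2, a + a = 0 := by decide
  exact this _

lemma zmod2_neg {n : ℕ} (x : Fin n → ZMod 2) : -x = x := by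
  rw [neg_eq_iff_add_eq_zero, zmod2_self_add]

lemma finset_sub_eq_add {n : ℕ} (B C : Finset (Fin n → ZMod 2)) : B - C = B + C := by
  ext x
  simp only [Finset.mem_sub, Finset.mem_add]
  constructor <;> rintro ⟨a, ha, b, hb, rfl⟩ <;>
    exact ⟨a, ha, b, hb, by rw [sub_eq_add_neg, zmod2_neg]⟩

lemma four_smul_eq {n : ℕ} (B : Finset (Fin n → ZMod 2)) : B + B + B + B = (4:ℕ) • B := by
  rw [show (4:ℕ) = 2+2 from rfl, add_nsmul, two_nsmul]
  abel

lemma plue {n : ℕ} (A : Finset (Fin n → ZMod 2)) (hne : A.Nonempty) (L : ℝ)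
    (hL : ((A+A).card : ℝ) ≤ L * A.card) : ((A+A+A+A).card : ℝ) ≤ L^4 * A.card := by
  have hpos : (0:ℝ) < A.card := by exact_mod_cast hne.card_pos
  have h := Finset.pluennecke_ruzsa_inequality_nsmul_add hne A 4
  have h2 : (((#((4:ℕ) • A) : ℚ≥0)) : ℝ) ≤ (((((#(A + A) : ℚ≥0)) / (#A : ℚ≥0)) ^ 4 * (#A : ℚ≥0) : ℚ≥0) : ℝ) := by
    exact_mod_cast h
  push_cast at h2
  rw [four_smul_eq]
  have hdiv : ((A+A).card : ℝ)/(A.card:ℝ) ≤ L := by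
    rw [div_le_iff₀ hpos]; exact hL
  have hp4 : (((A+A).card : ℝ)/(A.card:ℝ))^4 ≤ L^4 := by
    apply pow_le_pow_left₀ (by positivity) hdiv
  calc ((#((4:ℕ) • A) : ℕ) : ℝ) ≤ (((A+A).card : ℝ)/(A.card:ℝ))^4 * (A.card:ℝ) := h2
    _ ≤ L^4 * A.card := mul_le_mul_of_nonneg_right hp4 hpos.le

lemma span_card_bound {n : ℕ} (B : Finset (Fin n → ZMod 2)) (h0 : (0 : Fin n → ZMod 2) ∈ B)
    (L : ℝ) (hL : ((B+B).card : ℝ) ≤ L * B.card) :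
    (Nat.card (Submodule.span (ZMod 2) (B : Set (Fin n → ZMod 2))) : ℝ)
      ≤ 2 ^ (⌊L^4⌋₊) * (L * B.card) := by
  classical
  have hne : B.Nonempty := ⟨0, h0⟩
  have hcov : ((B+B+B+B).card : ℝ) ≤ (L^4) * B.card := plue B hne L hL
  obtain ⟨F, hFs, hFcard, hFcov⟩ := Finset.ruzsa_covering_add hne hcov
  rw [finset_sub_eq_add] at hFcov
  set Hf : Finset (Fin n → ZMod 2) := F.powerset.image (fun S => ∑ x ∈ S, x) with hHf
  have h0H : (0 : Fin n → ZMod 2) ∈ Hf :=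
    Finset.mem_image.2 ⟨∅, Finset.empty_mem_powerset _, Finset.sum_empty⟩
  have habs : ∀ h ∈ Hf, ∀ x ∈ F, h + x ∈ Hf := by
    intro h hh x hx
    obtain ⟨S, hS, rfl⟩ := Finset.mem_image.1 hh
    rw [Finset.mem_powerset] at hS
    by_cases hxS : x ∈ S
    · refine Finset.mem_image.2 ⟨S.erase x, Finset.mem_powerset.2 ((Finset.erase_subset _ _).trans hS), ?_⟩
      show (∑ y ∈ S.erase x, y) = (∑ y ∈ S, y) + x
      rw [← Finset.add_sum_erase S (fun y => y) hxS, add_comm x (∑ y ∈ S.erase x, y),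
        add_assoc, zmod2_self_add, add_zero]
    · refine Finset.mem_image.2 ⟨insert x S, Finset.mem_powerset.2 (Finset.insert_subset hx hS), ?_⟩
      rw [Finset.sum_insert hxS, add_comm]
  have hsum : ∀ S : Finset (Fin n → ZMod 2), S ⊆ B → (∑ x ∈ S, x) ∈ Hf + (B + B) := by
    intro S
    induction S using Finset.induction_on with
    | empty =>
      intro _
      rw [Finset.sum_empty]
      exact Finset.mem_add.2 ⟨0, h0H, 0, Finset.mem_add.2 ⟨0, h0, 0, h0, by simp⟩, by simp⟩
    | insert a S hnotmem ih =>
      intro hsub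
      have haB : a ∈ B := hsub (Finset.mem_insert_self a S)
      have hSB : S ⊆ B := fun x hx => hsub (Finset.mem_insert_of_mem hx)
      obtain ⟨h, hh, w, hw, hrep⟩ := Finset.mem_add.1 (ih hSB)
      obtain ⟨b1, hb1, b2, hb2, rfl⟩ := Finset.mem_add.1 hw
      have h3 : a + b1 + b2 ∈ F + (B + B) :=
        hFcov (Finset.mem_add.2 ⟨a + b1, Finset.mem_add.2 ⟨a, haB, b1, hb1, rfl⟩, b2, hb2, rfl⟩)
      obtain ⟨f, hf, w', hw', hrep'⟩ := Finset.mem_add.1 h3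
      rw [Finset.sum_insert hnotmem, ← hrep]
      refine Finset.mem_add.2 ⟨h + f, habs h hh f hf, w', hw', ?_⟩
      calc h + f + w' = h + (f + w') := by rw [add_assoc]
        _ = h + (a + b1 + b2) := by rw [hrep']
        _ = a + (h + (b1 + b2)) := by abel
  -- span is contained in Hf + (B + B)
  have hspan : (Submodule.span (ZMod 2) (B : Set (Fin n → ZMod 2)) : Set (Fin n → ZMod 2))
      ⊆ ↑(Hf + (B + B)) := by
    intro x hx
    rw [SetLike.mem_coe, Submodule.mem_span_finset] at hx
    obtain ⟨f, -, hf⟩ := hx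
    have hone : ∀ a : ZMod 2, a = 0 ∨ a = 1 := by decide
    have hx2 : x = ∑ i ∈ B.filter (fun i => f i = 1), i := by
      rw [← hf, Finset.sum_filter]
      refine Finset.sum_congr rfl fun i _ => ?_
      rcases hone (f i) with h | h <;> simp [h]
    rw [hx2]
    exact_mod_cast hsum _ (Finset.filter_subset _ _)
  -- cardinalities
  have hcard1 : Nat.card (Submodule.span (ZMod 2) (B : Set (Fin n → ZMod 2)))
      ≤ (Hf + (B + B)).card := by
    have h := Set.ncard_le_ncard hspan (Finset.finite_toSet _)
    have e : Nat.card (Submodule.span (ZMod 2) (B : Set (Fin n → ZMod 2)))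
        = ((Submodule.span (ZMod 2) (B : Set (Fin n → ZMod 2)) : Set (Fin n → ZMod 2))).ncard :=
      Nat.card_coe_set_eq _
    rw [e]
    rwa [Set.ncard_coe_finset] at h
  have hHcard : (Hf.card : ℝ) ≤ 2 ^ (⌊L^4⌋₊) := by
    have h1 : Hf.card ≤ F.powerset.card := Finset.card_image_le
    have h2 : F.powerset.card = 2 ^ F.card := Finset.card_powerset F
    have h3 : F.card ≤ ⌊L^4⌋₊ := Nat.le_floor hFcard
    have : Hf.card ≤ 2 ^ (⌊L^4⌋₊) := by
      calc Hf.card ≤ 2 ^ F.card := h1.trans_eq h2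
        _ ≤ 2 ^ (⌊L^4⌋₊) := Nat.pow_le_pow_right (by norm_num) h3
    exact_mod_cast this
  calc (Nat.card (Submodule.span (ZMod 2) (B : Set (Fin n → ZMod 2))) : ℝ)
      ≤ ((Hf + (B + B)).card : ℝ) := by exact_mod_cast hcard1
    _ ≤ (Hf.card : ℝ) * ((B+B).card : ℝ) := by exact_mod_cast Finset.card_add_le
    _ ≤ 2 ^ (⌊L^4⌋₊) * (L * B.card) :=
        mul_le_mul hHcard hL (by positivity) (by positivity)

lemma affine_card_le {n : ℕ} (A : Finset (Fin n → ZMod 2)) (hne : A.Nonempty) :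
    Nat.card (affineSpan (ZMod 2) (A : Set (Fin n → ZMod 2)))
      ≤ Nat.card (Submodule.span (ZMod 2) ((A + A : Finset (Fin n → ZMod 2)) : Set (Fin n → ZMod 2))) := by
  classical
  obtain ⟨a₀, ha₀⟩ := hne
  set W := Submodule.span (ZMod 2) ((A + A : Finset (Fin n → ZMod 2)) : Set (Fin n → ZMod 2)) with hW
  have hsub : affineSpan (ZMod 2) (A : Set (Fin n → ZMod 2)) ≤ AffineSubspace.mk' a₀ W := by
    rw [affineSpan_le]
    intro a ha
    rw [SetLike.mem_coe, AffineSubspace.mem_mk', vsub_eq_sub, sub_eq_add_neg,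
      zmod2_neg]
    exact Submodule.subset_span (Finset.mem_coe.2 (Finset.add_mem_add (Finset.mem_coe.1 ha) ha₀))
  have hfin : Finite W := Subtype.finite
  refine Nat.card_le_card_of_injective
    (fun x => (⟨(x : Fin n → ZMod 2) - a₀, by
      rw [← vsub_eq_sub]
      exact AffineSubspace.mem_mk'.1 (hsub x.2)⟩ : W)) ?_
  intro x y hxy
  have := congrArg Subtype.val hxy
  simp only [sub_left_inj] at this
  exact Subtype.ext this

lemma member_bound {n : ℕ} (K : ℝ) (A : Finset (Fin n → ZMod 2)) (hne : A.Nonempty)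
    (hK : ((A+A).card : ℝ) ≤ K * A.card) :
    (Nat.card (affineSpan (ZMod 2) (A : Set (Fin n → ZMod 2))) : ℝ)
      ≤ 2 ^ (⌊(K^4)^4⌋₊) * (K^4 * (K * A.card)) := by
  classical
  have hApos : (0:ℝ) < A.card := by exact_mod_cast hne.card_pos
  have hK0 : 0 ≤ K := by
    by_contra h
    push_neg at h
    have : (0:ℝ) < ((A+A).card : ℝ) := by
      have : (A+A).Nonempty := hne.add hne
      exact_mod_cast this.card_pos
    nlinarith
  set B := A + A with hB
  have h0B : (0 : Fin n → ZMod 2) ∈ B := by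
    obtain ⟨a, ha⟩ := hne
    exact Finset.mem_add.2 ⟨a, ha, a, ha, zmod2_self_add a⟩
  have hAB : (A.card : ℝ) ≤ B.card := by
    exact_mod_cast Finset.card_le_card_add_right hne
  have hBB : ((B+B).card : ℝ) ≤ K^4 * B.card := by
    have h4 : ((A+A+A+A).card : ℝ) ≤ K^4 * A.card := plue A hne K hK
    have : B + B = A + A + A + A := by rw [hB]; abel
    rw [this]
    calc ((A+A+A+A).card : ℝ) ≤ K^4 * A.card := h4
      _ ≤ K^4 * B.card := by
          apply mul_le_mul_of_nonneg_left hAB (by positivity)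
  have hspan := span_card_bound B h0B (K^4) hBB
  have haff : (Nat.card (affineSpan (ZMod 2) (A : Set (Fin n → ZMod 2))) : ℝ)
      ≤ (Nat.card (Submodule.span (ZMod 2) (B : Set (Fin n → ZMod 2))) : ℝ) := by
    exact_mod_cast affine_card_le A hne
  calc (Nat.card (affineSpan (ZMod 2) (A : Set (Fin n → ZMod 2))) : ℝ)
      ≤ (Nat.card (Submodule.span (ZMod 2) (B : Set (Fin n → ZMod 2))) : ℝ) := haff
    _ ≤ 2 ^ (⌊(K^4)^4⌋₊) * (K^4 * B.card) := hspan
    _ ≤ 2 ^ (⌊(K^4)^4⌋₊) * (K^4 * (K * A.card)) := by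
        apply mul_le_mul_of_nonneg_left _ (by positivity)
        apply mul_le_mul_of_nonneg_left _ (by positivity)
        calc (B.card : ℝ) = ((A+A).card : ℝ) := by rw [hB]
          _ ≤ K * A.card := hK

/-- indicator sum -/
def mm {t : ℕ} (S : Finset (Fin t)) : Fin t → ZMod 2 := ∑ i ∈ S, Pi.single i 1

lemma mm_apply {t : ℕ} (S : Finset (Fin t)) (j : Fin t) :
    mm S j = if j ∈ S then 1 else 0 := by
  unfold mm
  rw [Finset.sum_apply]
  simp_rw [Pi.single_apply]
  rw [Finset.sum_ite_eq S j (fun _ => (1 : ZMod 2))]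

lemma mm_inj {t : ℕ} : Function.Injective (mm (t := t)) := by
  intro S T h
  ext j
  have h' := congrFun h j
  rw [mm_apply, mm_apply] at h'
  by_cases hS : j ∈ S <;> by_cases hT : j ∈ T <;> simp [hS, hT] at h' ⊢

lemma mm_add {t : ℕ} (S T : Finset (Fin t)) : mm S + mm T = mm (S ∆ T) := by
  funext j
  have h11 : (1 : ZMod 2) + 1 = 0 := by decide
  show mm S j + mm T j = mm (S ∆ T) j
  rw [mm_apply, mm_apply, mm_apply]
  by_cases h1 : j ∈ S <;> by_cases h2 : j ∈ T <;>
    simp [h1, h2, Finset.mem_symmDiff, h11]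

lemma mm_empty {t : ℕ} : mm (∅ : Finset (Fin t)) = 0 := by simp [mm]

lemma mm_single {t : ℕ} (i : Fin t) : mm {i} = Pi.single i (1 : ZMod 2) := by simp [mm]

lemma mm_pair {t : ℕ} {i j : Fin t} (hij : i ≠ j) :
    mm {i, j} = Pi.single i (1 : ZMod 2) + Pi.single j 1 := by
  simp [mm, Finset.sum_pair hij]

/-- The Freiman–Ruzsa constant: `F(K) = sup {|⟨A⟩|/|A| : A ⊆ (ZMod 2)^n, n ∈ ℕ,
|A+A|/|A| ≤ K}`, where `⟨A⟩` is the affine span. -/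
noncomputable def FRconst (K : ℝ) : ℝ :=
  sSup {r : ℝ | ∃ (n : ℕ) (A : Finset (Fin n → ZMod 2)), A.Nonempty ∧
    ((A + A).card : ℝ) ≤ K * A.card ∧
    r = (Nat.card (affineSpan (ZMod 2) (A : Set (Fin n → ZMod 2))) : ℝ) / A.card}

theorem stmt11 (t : ℕ) (ht : 1 ≤ t) (A : Finset (Fin t → ZMod 2))
    (hA : A = insert 0 (Finset.univ.image fun i => Pi.single i (1 : ZMod 2))) :
    A.card = t + 1 ∧
    (A + A).card = t * (t - 1) / 2 + t + 1 ∧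
    affineSpan (ZMod 2) (A : Set (Fin t → ZMod 2)) = ⊤ ∧
    (2 ^ t : ℝ) / (t + 1) ≤ FRconst (((t * (t - 1) / 2 + t + 1 : ℕ) : ℝ) / ((t : ℝ) + 1)) := by
  classical
  have h0A : (0 : Fin t → ZMod 2) ∈ A := hA ▸ Finset.mem_insert_self _ _
  have heA : ∀ i : Fin t, Pi.single i (1 : ZMod 2) ∈ A := fun i =>
    hA ▸ Finset.mem_insert_of_mem (Finset.mem_image.2 ⟨i, Finset.mem_univ i, rfl⟩)
  -- Part 1
  have part1 : A.card = t + 1 := by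
    rw [hA]
    rw [Finset.card_insert_of_notMem, Finset.card_image_of_injective _ ?inj, Finset.card_univ,
      Fintype.card_fin]
    case inj =>
      intro i j hij
      have h' : mm {i} = mm {j} := by rw [mm_single, mm_single]; exact hij
      exact Finset.singleton_injective (mm_inj h')
    · intro h
      obtain ⟨i, -, hi⟩ := Finset.mem_image.1 h
      have := congrFun hi i
      simp at this
  -- representation of elements of A
  have hrep : ∀ a ∈ A, ∃ S : Finset (Fin t), S.card ≤ 1 ∧ mm S = a := by
    intro a ha
    rw [hA, Finset.mem_insert] at ha
    rcases ha with rfl | ha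
    · exact ⟨∅, by simp, mm_empty⟩
    · obtain ⟨i, -, rfl⟩ := Finset.mem_image.1 ha
      exact ⟨{i}, by simp, mm_single i⟩
  -- Part 2
  have hAA : A + A = (Finset.univ.powerset.filter (fun S : Finset (Fin t) => S.card ≤ 2)).image mm := by
    ext x
    constructor
    · intro hx
      obtain ⟨a, ha, b, hb, rfl⟩ := Finset.mem_add.1 hx
      obtain ⟨Sa, hca, rfl⟩ := hrep a ha
      obtain ⟨Sb, hcb, rfl⟩ := hrep b hb
      refine Finset.mem_image.2 ⟨Sa ∆ Sb, Finset.mem_filter.2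
        ⟨Finset.mem_powerset.2 (Finset.subset_univ _), ?_⟩, (mm_add _ _).symm⟩
      calc (Sa ∆ Sb).card ≤ (Sa ∪ Sb).card := Finset.card_le_card symmDiff_le_sup
        _ ≤ Sa.card + Sb.card := Finset.card_union_le _ _
        _ ≤ 2 := by omega
    · intro hx
      obtain ⟨S, hS, rfl⟩ := Finset.mem_image.1 hx
      have hc : S.card ≤ 2 := (Finset.mem_filter.1 hS).2
      obtain h0 | h1 | h2 : S.card = 0 ∨ S.card = 1 ∨ S.card = 2 := by omega
      · rw [Finset.card_eq_zero] at h0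
        subst h0
        exact Finset.mem_add.2 ⟨0, h0A, 0, h0A, by rw [mm_empty]; simp⟩
      · obtain ⟨i, rfl⟩ := Finset.card_eq_one.1 h1
        exact Finset.mem_add.2 ⟨0, h0A, Pi.single i 1, heA i, by rw [mm_single]; simp⟩
      · obtain ⟨i, j, hij, rfl⟩ := Finset.card_eq_two.1 h2
        exact Finset.mem_add.2 ⟨Pi.single i 1, heA i, Pi.single j 1, heA j, (mm_pair hij).symm⟩
  have part2 : (A + A).card = t * (t - 1) / 2 + t + 1 := by
    rw [hAA, Finset.card_image_of_injective _ mm_inj]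
    have hsplit : (Finset.univ.powerset.filter (fun S : Finset (Fin t) => S.card ≤ 2))
        = (Finset.powersetCard 0 (Finset.univ : Finset (Fin t)) ∪ Finset.powersetCard 1 Finset.univ)
          ∪ Finset.powersetCard 2 Finset.univ := by
      ext S
      simp only [Finset.mem_filter, Finset.mem_powerset, Finset.subset_univ, true_and,
        Finset.mem_union, Finset.mem_powersetCard_univ]
      omega
    rw [hsplit]
    rw [Finset.card_union_of_disjoint, Finset.card_union_of_disjoint]
    · simp only [Finset.card_powersetCard, Finset.card_univ, Fintype.card_fin,
        Nat.choose_zero_right, Nat.choose_one_right, Nat.choose_two_right]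
      generalize t * (t - 1) / 2 = C
      omega
    · rw [Finset.disjoint_left]
      intro S h1 h2
      rw [Finset.mem_powersetCard_univ] at h1 h2
      omega
    · rw [Finset.disjoint_left]
      intro S h1 h2
      rw [Finset.mem_union, Finset.mem_powersetCard_univ, Finset.mem_powersetCard_univ] at h1
      rw [Finset.mem_powersetCard_univ] at h2
      omega
  -- Part 3
  have part3 : affineSpan (ZMod 2) (A : Set (Fin t → ZMod 2)) = ⊤ := by
    have hsne : (A : Set (Fin t → ZMod 2)).Nonempty := ⟨0, h0A⟩
    rw [AffineSubspace.affineSpan_eq_top_iff_vectorSpan_eq_top_of_nonempty (ZMod 2) (Fin t → ZMod 2)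
      (Fin t → ZMod 2) hsne]
    rw [eq_top_iff]
    intro x _
    rw [vectorSpan_def]
    have hx := pi_eq_sum_univ x
    rw [hx]
    apply Submodule.sum_mem
    intro i _
    apply Submodule.smul_mem
    apply Submodule.subset_span
    have h1 : (fun j => if i = j then (1 : ZMod 2) else 0) = Pi.single i 1 := by
      funext j
      rw [Pi.single_apply]
      simp [eq_comm]
    rw [h1]
    have h2 : (Pi.single i 1 : Fin t → ZMod 2) -ᵥ (0 : Fin t → ZMod 2)
        ∈ (A : Set (Fin t → ZMod 2)) -ᵥ (A : Set (Fin t → ZMod 2)) :=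
      Set.vsub_mem_vsub (heA i) h0A
    simpa [vsub_eq_sub] using h2
  refine ⟨part1, part2, part3, ?_⟩
  -- Part 4
  set Knum : ℝ := ((t * (t - 1) / 2 + t + 1 : ℕ) : ℝ) / ((t : ℝ) + 1) with hKnum
  have htpos : (0:ℝ) < (t : ℝ) + 1 := by positivity
  have hAcard : (A.card : ℝ) = (t : ℝ) + 1 := by rw [part1]; push_cast; ring
  have hmem : (2 ^ t : ℝ) / (t + 1) ∈ {r : ℝ | ∃ (n : ℕ) (A : Finset (Fin n → ZMod 2)), A.Nonempty ∧
      ((A + A).card : ℝ) ≤ Knum * A.card ∧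
      r = (Nat.card (affineSpan (ZMod 2) (A : Set (Fin n → ZMod 2))) : ℝ) / A.card} := by
    refine ⟨t, A, ⟨0, h0A⟩, ?_, ?_⟩
    · rw [part2, hAcard, hKnum, div_mul_cancel₀ _ (ne_of_gt htpos)]
    · rw [part3, hAcard]
      congr 1
      have h1 : Nat.card (⊤ : AffineSubspace (ZMod 2) (Fin t → ZMod 2))
          = Nat.card (Fin t → ZMod 2) :=
        Nat.card_congr (Equiv.subtypeUnivEquiv (fun x => AffineSubspace.mem_top _ _ _))
      rw [h1, Nat.card_eq_fintype_card]
      simp [ZMod.card]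
  have hBdd : BddAbove {r : ℝ | ∃ (n : ℕ) (A : Finset (Fin n → ZMod 2)), A.Nonempty ∧
      ((A + A).card : ℝ) ≤ Knum * A.card ∧
      r = (Nat.card (affineSpan (ZMod 2) (A : Set (Fin n → ZMod 2))) : ℝ) / A.card} := by
    refine ⟨2 ^ (⌊(Knum^4)^4⌋₊) * (Knum^4 * Knum), ?_⟩
    rintro r ⟨n, A', hne', hK', rfl⟩
    have hApos : (0:ℝ) < A'.card := by exact_mod_cast hne'.card_pos
    rw [div_le_iff₀ hApos]
    calc (Nat.card (affineSpan (ZMod 2) (A' : Set (Fin n → ZMod 2))) : ℝ)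
        ≤ 2 ^ (⌊(Knum^4)^4⌋₊) * (Knum^4 * (Knum * A'.card)) := member_bound Knum A' hne' hK'
      _ = 2 ^ (⌊(Knum^4)^4⌋₊) * (Knum^4 * Knum) * A'.card := by ring
  exact le_csSup hBdd hmem
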